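/- arXiv:1402.2033 — 2 statements merged into one kernel-verified Lean document; each statement's English description precedes it below -/
import Mathlib

section
/- Let C be a closed model category and g: X→Y a morphism in C. The Quillen adjunction (g_!, g^*): (X↓C) → (Y↓C) is a Quillen equivalence if and only if for every cofibrant object u of (X↓C) (i.e. every u: X→C that is a cofibration in C), the cobase change of g along u is a weak equivalence in C. -/
open CategoryTheory CategoryTheory.Limits

universe v u v' u'

/-- `f` is a retract of `g` in the arrow category. -/
def IsRetractOfArrow {C : Type u} [Category.{v} C] {A B A' B' : C}
    (f : A ⟶ B) (g : A' ⟶ B') : Prop :=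
  ∃ (i : Arrow.mk f ⟶ Arrow.mk g) (r : Arrow.mk g ⟶ Arrow.mk f), i ≫ r = 𝟙 (Arrow.mk f)

/-- A (closed) model structure on a category `C`, in the sense of Quillen: three classes of
morphisms (cofibrations, fibrations, weak equivalences) satisfying the two-out-of-three
axiom, closure under retracts, the lifting axioms and the factorization axioms. -/
structure ModelStruct (C : Type u) [Category.{v} C] : Type (max u v) where
  cof : MorphismProperty C
  fib : MorphismProperty C
  weq : MorphismProperty C
  weq_comp : ∀ {X Y Z : C} (f : X ⟶ Y) (g : Y ⟶ Z), weq f → weq g → weq (f ≫ g)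
  weq_cancel_left : ∀ {X Y Z : C} (f : X ⟶ Y) (g : Y ⟶ Z), weq f → weq (f ≫ g) → weq g
  weq_cancel_right : ∀ {X Y Z : C} (f : X ⟶ Y) (g : Y ⟶ Z), weq g → weq (f ≫ g) → weq f
  cof_retract : ∀ {A B A' B' : C} {f : A ⟶ B} {g : A' ⟶ B'},
    IsRetractOfArrow f g → cof g → cof f
  fib_retract : ∀ {A B A' B' : C} {f : A ⟶ B} {g : A' ⟶ B'},
    IsRetractOfArrow f g → fib g → fib f
  weq_retract : ∀ {A B A' B' : C} {f : A ⟶ B} {g : A' ⟶ B'},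
    IsRetractOfArrow f g → weq g → weq f
  lifting_cof_trivFib : ∀ {A B X Y : C} (i : A ⟶ B) (p : X ⟶ Y),
    cof i → fib p → weq p → HasLiftingProperty i p
  lifting_trivCof_fib : ∀ {A B X Y : C} (i : A ⟶ B) (p : X ⟶ Y),
    cof i → weq i → fib p → HasLiftingProperty i p
  factor_cof_trivFib : ∀ {X Y : C} (f : X ⟶ Y),
    ∃ (Z : C) (i : X ⟶ Z) (p : Z ⟶ Y), cof i ∧ fib p ∧ weq p ∧ i ≫ p = f
  factor_trivCof_fib : ∀ {X Y : C} (f : X ⟶ Y),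
    ∃ (Z : C) (i : X ⟶ Z) (p : Z ⟶ Y), cof i ∧ weq i ∧ fib p ∧ i ≫ p = f

variable {C : Type u} [Category.{v} C]

/-- An object is cofibrant if the unique map from the initial object to it is a cofibration. -/
def ModelStruct.Cofibrant [HasInitial C] (M : ModelStruct C) (A : C) : Prop :=
  M.cof (initial.to A)

/-- An object is fibrant if the unique map from it to the terminal object is a fibration. -/
def ModelStruct.Fibrant [HasTerminal C] (M : ModelStruct C) (A : C) : Prop :=
  M.fib (terminal.from A)

/-- The induced model structure on the coslice category `(X ↓ C)`: a morphism is a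
cofibration, fibration or weak equivalence iff its underlying morphism in `C` is one. -/
def ModelStruct.under (M : ModelStruct C) (X : C) : ModelStruct (Under X) where
  cof _ _ f := M.cof f.right
  fib _ _ f := M.fib f.right
  weq _ _ f := M.weq f.right
  weq_comp f g hf hg := by simpa using M.weq_comp f.right g.right hf hg
  weq_cancel_left f g hf hfg := M.weq_cancel_left f.right g.right hf (by simpa using hfg)
  weq_cancel_right f g hg hfg := M.weq_cancel_right f.right g.right hg (by simpa using hfg)
  cof_retract := fun ⟨i, r, hir⟩ hg => M.cof_retract
    ⟨(Under.forget X).mapArrow.map i, (Under.forget X).mapArrow.map r,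
      by
        have h := congrArg (Under.forget X).mapArrow.map hir
        rw [CategoryTheory.Functor.map_comp, CategoryTheory.Functor.map_id] at h
        exact h⟩ hg
  fib_retract := fun ⟨i, r, hir⟩ hg => M.fib_retract
    ⟨(Under.forget X).mapArrow.map i, (Under.forget X).mapArrow.map r,
      by
        have h := congrArg (Under.forget X).mapArrow.map hir
        rw [CategoryTheory.Functor.map_comp, CategoryTheory.Functor.map_id] at h
        exact h⟩ hg
  weq_retract := fun ⟨i, r, hir⟩ hg => M.weq_retract
    ⟨(Under.forget X).mapArrow.map i, (Under.forget X).mapArrow.map r,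
      by
        have h := congrArg (Under.forget X).mapArrow.map hir
        rw [CategoryTheory.Functor.map_comp, CategoryTheory.Functor.map_id] at h
        exact h⟩ hg
  lifting_cof_trivFib i p hi hp hp' := by
    constructor
    intro f g sq
    haveI := M.lifting_cof_trivFib i.right p.right hi hp hp'
    have sq' : CommSq f.right i.right p.right g.right :=
      ⟨by rw [← Under.comp_right, sq.w, Under.comp_right]⟩
    exact ⟨⟨⟨Under.homMk sq'.lift (by
        rw [← Under.w i, Category.assoc, sq'.fac_left, Under.w f]),
      by ext; exact sq'.fac_left, by ext; exact sq'.fac_right⟩⟩⟩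
  lifting_trivCof_fib i p hi hi' hp := by
    constructor
    intro f g sq
    haveI := M.lifting_trivCof_fib i.right p.right hi hi' hp
    have sq' : CommSq f.right i.right p.right g.right :=
      ⟨by rw [← Under.comp_right, sq.w, Under.comp_right]⟩
    exact ⟨⟨⟨Under.homMk sq'.lift (by
        rw [← Under.w i, Category.assoc, sq'.fac_left, Under.w f]),
      by ext; exact sq'.fac_left, by ext; exact sq'.fac_right⟩⟩⟩
  factor_cof_trivFib {A B} f := by
    obtain ⟨Z, i, p, hi, hp, hp', hfac⟩ := M.factor_cof_trivFib f.right
    exact ⟨Under.mk (A.hom ≫ i), Under.homMk i rfl,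
      Under.homMk p (by show (A.hom ≫ i) ≫ p = B.hom; rw [Category.assoc, hfac, Under.w f]),
      hi, hp, hp', by ext; exact hfac⟩
  factor_trivCof_fib {A B} f := by
    obtain ⟨Z, i, p, hi, hi', hp, hfac⟩ := M.factor_trivCof_fib f.right
    exact ⟨Under.mk (A.hom ≫ i), Under.homMk i rfl,
      Under.homMk p (by show (A.hom ≫ i) ≫ p = B.hom; rw [Category.assoc, hfac, Under.w f]),
      hi, hi', hp, by ext; exact hfac⟩

/-- The induced model structure on the slice category `(C ↓ X)`: a morphism is a
cofibration, fibration or weak equivalence iff its underlying morphism in `C` is one. -/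
def ModelStruct.over (M : ModelStruct C) (X : C) : ModelStruct (Over X) where
  cof _ _ f := M.cof f.left
  fib _ _ f := M.fib f.left
  weq _ _ f := M.weq f.left
  weq_comp f g hf hg := by simpa using M.weq_comp f.left g.left hf hg
  weq_cancel_left f g hf hfg := M.weq_cancel_left f.left g.left hf (by simpa using hfg)
  weq_cancel_right f g hg hfg := M.weq_cancel_right f.left g.left hg (by simpa using hfg)
  cof_retract := fun ⟨i, r, hir⟩ hg => M.cof_retract
    ⟨(Over.forget X).mapArrow.map i, (Over.forget X).mapArrow.map r,
      by
        have h := congrArg (Over.forget X).mapArrow.map hir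
        rw [CategoryTheory.Functor.map_comp, CategoryTheory.Functor.map_id] at h
        exact h⟩ hg
  fib_retract := fun ⟨i, r, hir⟩ hg => M.fib_retract
    ⟨(Over.forget X).mapArrow.map i, (Over.forget X).mapArrow.map r,
      by
        have h := congrArg (Over.forget X).mapArrow.map hir
        rw [CategoryTheory.Functor.map_comp, CategoryTheory.Functor.map_id] at h
        exact h⟩ hg
  weq_retract := fun ⟨i, r, hir⟩ hg => M.weq_retract
    ⟨(Over.forget X).mapArrow.map i, (Over.forget X).mapArrow.map r,
      by
        have h := congrArg (Over.forget X).mapArrow.map hir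
        rw [CategoryTheory.Functor.map_comp, CategoryTheory.Functor.map_id] at h
        exact h⟩ hg
  lifting_cof_trivFib i p hi hp hp' := by
    constructor
    intro f g sq
    haveI := M.lifting_cof_trivFib i.left p.left hi hp hp'
    have sq' : CommSq f.left i.left p.left g.left :=
      ⟨by rw [← Over.comp_left, sq.w, Over.comp_left]⟩
    exact ⟨⟨⟨Over.homMk sq'.lift (by
        rw [← Over.w p, ← Category.assoc, sq'.fac_right, Over.w g]),
      by ext; exact sq'.fac_left, by ext; exact sq'.fac_right⟩⟩⟩
  lifting_trivCof_fib i p hi hi' hp := by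
    constructor
    intro f g sq
    haveI := M.lifting_trivCof_fib i.left p.left hi hi' hp
    have sq' : CommSq f.left i.left p.left g.left :=
      ⟨by rw [← Over.comp_left, sq.w, Over.comp_left]⟩
    exact ⟨⟨⟨Over.homMk sq'.lift (by
        rw [← Over.w p, ← Category.assoc, sq'.fac_right, Over.w g]),
      by ext; exact sq'.fac_left, by ext; exact sq'.fac_right⟩⟩⟩
  factor_cof_trivFib {A B} f := by
    obtain ⟨Z, i, p, hi, hp, hp', hfac⟩ := M.factor_cof_trivFib f.left
    exact ⟨Over.mk (p ≫ B.hom), Over.homMk i (by show i ≫ p ≫ B.hom = A.hom; rw [← Category.assoc, hfac, Over.w f]),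
      Over.homMk p rfl, hi, hp, hp', by ext; exact hfac⟩
  factor_trivCof_fib {A B} f := by
    obtain ⟨Z, i, p, hi, hi', hp, hfac⟩ := M.factor_trivCof_fib f.left
    exact ⟨Over.mk (p ≫ B.hom), Over.homMk i (by show i ≫ p ≫ B.hom = A.hom; rw [← Category.assoc, hfac, Over.w f]),
      Over.homMk p rfl, hi, hi', hp, by ext; exact hfac⟩

noncomputable instance (X : C) : HasInitial (Under X) :=
  Under.mkIdInitial.hasInitial

noncomputable instance (X : C) : HasTerminal (Over X) :=
  Over.mkIdTerminal.hasTerminal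

/-- The terminal object of `(X ↓ C)` is `X ⟶ *`. -/
noncomputable def underMkTerminal [HasTerminal C] (X : C) :
    IsTerminal (Under.mk (terminal.from X)) :=
  IsTerminal.ofUniqueHom (fun u => Under.homMk (terminal.from u.right)
      (terminal.hom_ext _ _))
    (fun u m => by ext; exact terminal.hom_ext _ _)

noncomputable instance [HasTerminal C] (X : C) : HasTerminal (Under X) :=
  (underMkTerminal X).hasTerminal

/-- The initial object of `(C ↓ X)` is `∅ ⟶ X`. -/
noncomputable def overMkInitial [HasInitial C] (X : C) :
    IsInitial (Over.mk (initial.to X)) :=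
  IsInitial.ofUniqueHom (fun u => Over.homMk (initial.to u.left)
      (initial.hom_ext _ _))
    (fun u m => by ext; exact initial.hom_ext _ _)

noncomputable instance [HasInitial C] (X : C) : HasInitial (Over X) :=
  (overMkInitial X).hasInitial

/-- A Quillen adjunction between model categories: an adjoint pair whose left adjoint
preserves cofibrations and acyclic cofibrations. -/
structure QuillenAdjunction {C : Type u} [Category.{v} C] {D : Type u'} [Category.{v'} D]
    (M : ModelStruct C) (N : ModelStruct D) (F : C ⥤ D) (G : D ⥤ C) where
  adj : F ⊣ G
  map_cof : ∀ {A B : C} (f : A ⟶ B), M.cof f → N.cof (F.map f)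
  map_trivCof_weq : ∀ {A B : C} (f : A ⟶ B), M.cof f → M.weq f → N.weq (F.map f)

/-- A Quillen adjunction is a Quillen equivalence if for every cofibrant `A` and fibrant `B`,
a map `F A ⟶ B` is a weak equivalence iff its adjunct `A ⟶ G B` is. -/
def IsQuillenEquivalence {C : Type u} [Category.{v} C] {D : Type u'} [Category.{v'} D]
    [HasInitial C] [HasTerminal D]
    (M : ModelStruct C) (N : ModelStruct D) {F : C ⥤ D} {G : D ⥤ C} (adj : F ⊣ G) : Prop :=
  ∀ (A : C) (B : D), M.Cofibrant A → N.Fibrant B →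
    ∀ f : F.obj A ⟶ B, N.weq f ↔ M.weq ((adj.homEquiv A B) f)


lemma isoRetractLeft {A A' B : C} (e : A' ≅ A) (f : A ⟶ B) :
    IsRetractOfArrow (e.hom ≫ f) f :=
  ⟨Arrow.homMk (u := e.hom) (v := 𝟙 B) (by simp),
   Arrow.homMk (u := e.inv) (v := 𝟙 B) (by simp),
   by ext <;> simp⟩

lemma under_cofibrant_iff [HasColimits C] (M : ModelStruct C) {X : C} (u : Under X) :
    (M.under X).Cofibrant u ↔ M.cof u.hom := by
  have e : (⊥_ (Under X)) ≅ Under.mk (𝟙 X) := initialIsoIsInitial Under.mkIdInitial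
  set t : Under.mk (𝟙 X) ⟶ u := Under.mkIdInitial.to u with ht
  have htr : t.right = u.hom := by simpa using Under.w t
  have h1 : initial.to u = e.hom ≫ t := initial.hom_ext _ _
  have h2 : t = e.inv ≫ initial.to u := by rw [h1]; simp
  constructor
  · intro h
    have : M.cof (e.inv.right ≫ (initial.to u).right) :=
      M.cof_retract (isoRetractLeft ((Under.forget X).mapIso e.symm) _) h
    rw [← Under.comp_right, ← h2, htr] at this
    exact this
  · intro h
    have h' : M.cof t.right := by rw [htr]; exact h
    have : M.cof (e.hom.right ≫ t.right) :=
      M.cof_retract (isoRetractLeft ((Under.forget X).mapIso e) _) h'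
    rw [← Under.comp_right, ← h1] at this
    exact this

/-- **Statement 9.** For a morphism `g : X ⟶ Y` in a closed model category `C`, the Quillen
adjunction `(g_!, g^*) : (X ↓ C) → (Y ↓ C)` is a Quillen equivalence if and only if for every
cofibrant object `u` of `(X ↓ C)` (i.e. every `u : X ⟶ C` that is a cofibration in `C`), the
cobase change of `g` along `u` is a weak equivalence in `C`. -/
theorem coslice_quillen_equivalence_iff {C : Type u} [Category.{v} C]
    [HasLimits C] [HasColimits C] (M : ModelStruct C) {X Y : C} (g : X ⟶ Y) :
    IsQuillenEquivalence (M.under X) (M.under Y) (Under.mapPushoutAdj g) ↔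
      ∀ u : Under X, M.cof u.hom → M.weq (pushout.inl u.hom g) := by
  have heq : ∀ (u : Under X) (v : Under Y) (f : (Under.pushout g).obj u ⟶ v),
      (((Under.mapPushoutAdj g).homEquiv u v) f).right = pushout.inl u.hom g ≫ f.right := by
    intro u v f
    rw [Under.mapPushoutAdj, Adjunction.mkOfHomEquiv_homEquiv]
    rfl
  constructor
  · intro hQ u hu
    -- fibrant replacement of the pushout object in Under Y
    obtain ⟨Z, j, p, hjc, hjw, hpf, hfac⟩ :=
      (M.under Y).factor_trivCof_fib (terminal.from ((Under.pushout g).obj u))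
    have hfib : (M.under Y).Fibrant Z := by
      have : terminal.from Z = p := terminal.hom_ext _ _
      unfold ModelStruct.Fibrant
      rw [this]; exact hpf
    have hcof : (M.under X).Cofibrant u := (under_cofibrant_iff M u).2 hu
    have := (hQ u Z hcof hfib j).1 hjw
    rw [show (M.under X).weq _ = M.weq (((Under.mapPushoutAdj g).homEquiv u Z) j).right
      from rfl, heq] at this
    exact M.weq_cancel_right _ _ hjw this
  · intro h u v hu hv f
    have hinl : M.weq (pushout.inl u.hom g) := h u ((under_cofibrant_iff M u).1 hu)
    show M.weq f.right ↔ M.weq (((Under.mapPushoutAdj g).homEquiv u v) f).right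
    rw [heq]
    exact ⟨fun hf => M.weq_comp _ _ hinl hf,
      fun hf => M.weq_cancel_left _ _ hinl hf⟩
end

section
/- Let k be a field, R = k[x]/(x²), and let k denote the simple R-module R/(x). Then k and k⊕k are not stably isomorphic: there do not exist R-module homomorphisms f: k → k⊕k and g: k⊕k → k such that g∘f − id_k factors through a projective R-module and f∘g − id_{k⊕k} factors through a projective R-module. In particular, the unit map k → k⊕k of the adjunction (g_!, g^*) induced by the map 0 → k is not a stable equivalence. -/
open Polynomial

set_option synthInstance.maxHeartbeats 1000000
set_option maxHeartbeats 1000000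

/-- `R = k[x]/(x²)`. -/
abbrev DualNumbers (k : Type u) [Field k] : Type u :=
  Polynomial k ⧸ (Ideal.span ({Polynomial.X ^ 2} : Set (Polynomial k)))

/-- The class of `x` in `R = k[x]/(x²)`. -/
noncomputable def dnX (k : Type u) [Field k] : DualNumbers k :=
  Ideal.Quotient.mk _ Polynomial.X

/-- The simple module `k = R/(x)` over `R = k[x]/(x²)`. -/
abbrev SimpleMod (k : Type u) [Field k] : Type u :=
  DualNumbers k ⧸ (Ideal.span ({dnX k} : Set (DualNumbers k)))

/-- A linear map factors through a projective module. -/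
def FactorsThroughProjective (R : Type u) [Ring R] {M N : Type u}
    [AddCommGroup M] [Module R M] [AddCommGroup N] [Module R N] (φ : M →ₗ[R] N) : Prop :=
  ∃ (P : Type u) (_ : AddCommGroup P) (_ : Module R P) (_ : Module.Projective R P)
    (a : M →ₗ[R] P) (b : P →ₗ[R] N), b ∘ₗ a = φ

section Aux

variable (k : Type) [Field k]

/-- eval at 0 on R -/
noncomputable def dnEval : DualNumbers k →+* k :=
  Ideal.Quotient.lift _ (Polynomial.evalRingHom (0 : k)) (by
    intro p hp
    rw [Ideal.mem_span_singleton] at hp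
    obtain ⟨q, rfl⟩ := hp
    simp)

noncomputable def smEval : SimpleMod k →+* k :=
  Ideal.Quotient.lift _ (dnEval k) (by
    intro r hr
    rw [Ideal.mem_span_singleton] at hr
    obtain ⟨q, rfl⟩ := hr
    have : dnEval k (dnX k) = 0 := by
      simp [dnEval, dnX]
    simp [this])

lemma sm_one_ne_zero : (1 : SimpleMod k) ≠ 0 := by
  intro h
  have := congrArg (smEval k) h
  simp at this

lemma ann_of_xmul (r : DualNumbers k) (h : dnX k * r = 0) : ∃ c, r = dnX k * c := by
  obtain ⟨p, rfl⟩ := Ideal.Quotient.mk_surjective r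
  have : (Ideal.Quotient.mk _ (Polynomial.X * p) : DualNumbers k) = 0 := by
    rw [map_mul]; exact h
  rw [Ideal.Quotient.eq_zero_iff_mem, Ideal.mem_span_singleton] at this
  obtain ⟨q, hq⟩ := this
  refine ⟨Ideal.Quotient.mk _ q, ?_⟩
  rw [dnX, ← map_mul]
  congr 1
  have hX : (Polynomial.X : Polynomial k) ≠ 0 := Polynomial.X_ne_zero
  apply mul_left_cancel₀ hX
  rw [hq]; ring

lemma proj_ann (P : Type) [AddCommGroup P] [Module (DualNumbers k) P]
    [hP : Module.Projective (DualNumbers k) P] (p : P) (hp : dnX k • p = 0) :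
    ∃ q : P, p = dnX k • q := by
  obtain ⟨s, hs⟩ := hP.out
  set w : P →₀ DualNumbers k := s p with hw
  have hxw : ∀ i, dnX k * w i = 0 := by
    intro i
    have : dnX k • w = 0 := by
      rw [hw, ← map_smul, hp, map_zero]
    have := congrFun (congrArg DFunLike.coe this) i
    simpa using this
  have hc : ∀ i, ∃ c, w i = dnX k * c := fun i => ann_of_xmul k _ (hxw i)
  choose c hcc using hc
  set t : P →₀ DualNumbers k := ∑ i ∈ w.support, Finsupp.single i (c i) with ht
  refine ⟨Finsupp.linearCombination _ id t, ?_⟩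
  have hxt : dnX k • t = w := by
    rw [ht, Finset.smul_sum]
    have : ∀ i ∈ w.support, dnX k • Finsupp.single i (c i) = Finsupp.single i (w i) := by
      intro i _
      rw [Finsupp.smul_single, smul_eq_mul, ← hcc]
    rw [Finset.sum_congr rfl this]
    exact Finsupp.sum_single w
  rw [← map_smul, hxt]
  exact (hs p).symm

lemma factors_eq_zero {M N : Type} [AddCommGroup M] [Module (DualNumbers k) M]
    [AddCommGroup N] [Module (DualNumbers k) N]
    (hM : ∀ m : M, dnX k • m = 0) (hN : ∀ n : N, dnX k • n = 0)
    (φ : M →ₗ[DualNumbers k] N) (h : FactorsThroughProjective (DualNumbers k) φ) : φ = 0 := by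
  obtain ⟨P, _, _, _, a, b, hba⟩ := h
  ext m
  obtain ⟨q, hq⟩ := proj_ann k P (a m) (by rw [← map_smul, hM, map_zero])
  have : φ m = b (a m) := by rw [← hba]; rfl
  rw [this, hq, map_smul, hN]
  rfl

lemma sm_x_ann (m : SimpleMod k) : dnX k • m = 0 := by
  obtain ⟨r, rfl⟩ := Ideal.Quotient.mk_surjective m
  have : dnX k • (Ideal.Quotient.mk _ r : SimpleMod k) = Ideal.Quotient.mk _ (dnX k * r) := by
    rfl
  rw [this, Ideal.Quotient.eq_zero_iff_mem, Ideal.mem_span_singleton]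
  exact Dvd.intro r rfl

lemma sm2_x_ann (m : SimpleMod k × SimpleMod k) : dnX k • m = 0 := by
  cases m with
  | mk a b => ext <;> simp [sm_x_ann]

lemma smul_eq_mk_mul (r : DualNumbers k) (m : SimpleMod k) :
    r • m = Ideal.Quotient.mk _ r * m := by
  obtain ⟨s, rfl⟩ := Ideal.Quotient.mk_surjective m
  rw [← map_mul]
  rfl

end Aux

set_option maxHeartbeats 1000000 in
/-- **Statement 16.** Let `k` be a field, `R = k[x]/(x²)`, and let `k` also denote the simple
`R`-module `R/(x)`. Then `k` and `k ⊕ k` are not stably isomorphic: there are no `R`-module maps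
`f : k → k ⊕ k` and `g : k ⊕ k → k` such that `g ∘ f - id` and `f ∘ g - id` both factor through
projective `R`-modules. In particular the unit map `k → k ⊕ k`, `m ↦ (m, 0)`, of the adjunction
`(g_!, g^*)` induced by `0 → k` is not a stable equivalence. -/
theorem simple_not_stably_isomorphic_to_square (k : Type) [Field k] :
    (¬ ∃ (f : SimpleMod k →ₗ[DualNumbers k] SimpleMod k × SimpleMod k)
        (g : SimpleMod k × SimpleMod k →ₗ[DualNumbers k] SimpleMod k),
        FactorsThroughProjective (DualNumbers k) ((g ∘ₗ f - LinearMap.id : SimpleMod k →ₗ[DualNumbers k] SimpleMod k)) ∧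
        FactorsThroughProjective (DualNumbers k) ((f ∘ₗ g - LinearMap.id : SimpleMod k × SimpleMod k →ₗ[DualNumbers k] SimpleMod k × SimpleMod k))) ∧
    (¬ ∃ (g : SimpleMod k × SimpleMod k →ₗ[DualNumbers k] SimpleMod k),
        FactorsThroughProjective (DualNumbers k)
          ((g ∘ₗ (LinearMap.prod LinearMap.id 0) - LinearMap.id : SimpleMod k →ₗ[DualNumbers k] SimpleMod k)) ∧
        FactorsThroughProjective (DualNumbers k)
          (((LinearMap.prod LinearMap.id 0) ∘ₗ g - LinearMap.id : SimpleMod k × SimpleMod k →ₗ[DualNumbers k] SimpleMod k × SimpleMod k))) := by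
  have hsm := sm_x_ann k
  have hsm2 := sm2_x_ann k
  constructor
  · rintro ⟨f, g, h1, h2⟩
    have hgf : g ∘ₗ f = LinearMap.id := by
      have := factors_eq_zero k hsm hsm (g ∘ₗ f - LinearMap.id) h1
      linear_combination (norm := module) this
    have hfg : f ∘ₗ g = LinearMap.id := by
      have := factors_eq_zero k hsm2 hsm2 (f ∘ₗ g - LinearMap.id) h2
      linear_combination (norm := module) this
    set ab := f 1 with hab
    have hf1 : ∀ m : SimpleMod k, f m = (m * ab.1, m * ab.2) := by
      intro m
      obtain ⟨r, rfl⟩ := Ideal.Quotient.mk_surjective m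
      have h1 : f (Ideal.Quotient.mk _ r) = r • f 1 := by
        rw [← map_smul]; congr 1; rw [smul_eq_mk_mul]; exact (mul_one (Ideal.Quotient.mk (Ideal.span {dnX k}) r : SimpleMod k)).symm
      rw [h1]
      ext
      · show r • ab.1 = _
        rw [smul_eq_mk_mul]
      · show r • ab.2 = _
        rw [smul_eq_mk_mul]
    have h10 : f (g (1, 0)) = ((1 : SimpleMod k), (0 : SimpleMod k)) := by
      rw [← LinearMap.comp_apply, hfg]; rfl
    have h01 : f (g (0, 1)) = ((0 : SimpleMod k), (1 : SimpleMod k)) := by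
      rw [← LinearMap.comp_apply, hfg]; rfl
    rw [hf1, Prod.mk.injEq] at h10 h01
    obtain ⟨hs1, hs2⟩ := h10
    obtain ⟨ht1, ht2⟩ := h01
    have hb : ab.2 = 0 := by
      calc ab.2 = (g (1, 0) * ab.1) * ab.2 := by rw [hs1]; exact (one_mul ab.2).symm
        _ = (g (1, 0) * ab.2) * ab.1 := by ring
        _ = 0 := by rw [hs2]; exact zero_mul ab.1
    have ha : ab.1 = 0 := by
      calc ab.1 = (g (0, 1) * ab.2) * ab.1 := by rw [ht2]; exact (one_mul ab.1).symm
        _ = (g (0, 1) * ab.1) * ab.2 := by ring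
        _ = 0 := by rw [ht1]; exact zero_mul ab.2
    apply sm_one_ne_zero k
    rw [← hs1, ha]; exact mul_zero (g (1, 0))
  · rintro ⟨g, _, h2⟩
    have hfg : (LinearMap.prod LinearMap.id 0 : SimpleMod k →ₗ[DualNumbers k] _) ∘ₗ g
        = LinearMap.id := by
      have := factors_eq_zero k hsm2 hsm2 _ h2
      linear_combination (norm := module) this
    have := congrArg (fun φ => (φ ((0 : SimpleMod k), (1 : SimpleMod k))).2)
      (congrArg DFunLike.coe hfg)
    simp [LinearMap.prod_apply] at this
    exact sm_one_ne_zero k this.symm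
end
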